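/- Let A(z) = Σ_{i≥0} ((6i)!/((3i)!(2i)!))·(z/72)^i and B(z) = Σ_{i≥0} ((6i)!/((3i)!(2i)!))·((6i+1)/(6i−1))·(z/72)^i. Then z + 4z² + 36z²·(z·d/dz)²(log A) + 24z²·(z·d/dz)(log A) = 1/4 − (1/4)·(B/A)². -/

import Mathlib

open PowerSeries

/-- `A(z) = Σ_{i≥0} ((6i)!/((3i)!(2i)!)) (z/72)^i`. -/
noncomputable def hgA : PowerSeries ℚ :=
  PowerSeries.mk fun i =>
    ((6 * i).factorial : ℚ) / (((3 * i).factorial : ℚ) * ((2 * i).factorial : ℚ)) / 72 ^ i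

/-- `B(z) = Σ_{i≥0} ((6i)!/((3i)!(2i)!))·((6i+1)/(6i−1)) (z/72)^i`. -/
noncomputable def hgB : PowerSeries ℚ :=
  PowerSeries.mk fun i =>
    ((6 * i).factorial : ℚ) / (((3 * i).factorial : ℚ) * ((2 * i).factorial : ℚ)) *
      ((6 * (i : ℚ) + 1) / (6 * (i : ℚ) - 1)) / 72 ^ i

/-- `log(1+x) = Σ_{n≥1} (-1)^{n-1} x^n / n`. -/
noncomputable def logOneAdd : PowerSeries ℚ :=
  PowerSeries.mk fun n => if n = 0 then 0 else (-1) ^ (n - 1) / (n : ℚ)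

/-- Composition `f ∘ g` of formal power series (the correct composition whenever the
constant term of `g` vanishes). -/
noncomputable def comp (f g : PowerSeries ℚ) : PowerSeries ℚ :=
  PowerSeries.mk fun n =>
    ∑ k ∈ Finset.range (n + 1),
      PowerSeries.coeff k f * PowerSeries.coeff n (g ^ k)

/-- `log A`, defined since `A(0) = 1`. -/
noncomputable def logA : PowerSeries ℚ := comp logOneAdd (hgA - 1)

/-- The Euler operator `z·d/dz`. -/
noncomputable def euler (f : PowerSeries ℚ) : PowerSeries ℚ :=
  PowerSeries.X * PowerSeries.derivative ℚ f


lemma coeff_hgA (n : ℕ) : (coeff n) hgA =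
    ((6*n).factorial : ℚ) / (((3*n).factorial : ℚ) * ((2*n).factorial : ℚ)) / 72 ^ n := by
  simp [hgA]

lemma hgA_zero : constantCoeff hgA = 1 := by
  have h := coeff_hgA 0
  rw [coeff_zero_eq_constantCoeff] at h
  simpa [Nat.factorial] using h

lemma fact6 (m : ℕ) : ((m+6).factorial : ℚ)
    = (m+6)*((m+5)*((m+4)*((m+3)*((m+2)*((m+1)*(m.factorial)))))) := by
  show ((m+1+1+1+1+1+1).factorial : ℚ) = _
  push_cast [Nat.factorial_succ]
  ring

lemma fact3 (m : ℕ) : ((m+3).factorial : ℚ) = (m+3)*((m+2)*((m+1)*(m.factorial))) := by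
  show ((m+1+1+1).factorial : ℚ) = _
  push_cast [Nat.factorial_succ]
  ring

lemma fact2 (m : ℕ) : ((m+2).factorial : ℚ) = (m+2)*((m+1)*(m.factorial)) := by
  show ((m+1+1).factorial : ℚ) = _
  push_cast [Nat.factorial_succ]
  ring

lemma hgA_rec (n : ℕ) :
    (coeff (n+1)) hgA * (6*(n:ℚ)+6) = (6*(n:ℚ)+1)*(6*(n:ℚ)+5) * (coeff n) hgA := by
  rw [coeff_hgA, coeff_hgA]
  have e6 : 6*(n+1) = 6*n+6 := by ring
  have e3 : 3*(n+1) = 3*n+3 := by ring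
  have e2 : 2*(n+1) = 2*n+2 := by ring
  rw [e6, e3, e2, fact6, fact3, fact2]
  have h6 : ((6*n).factorial : ℚ) ≠ 0 := Nat.cast_ne_zero.mpr (Nat.factorial_ne_zero _)
  have h3 : ((3*n).factorial : ℚ) ≠ 0 := Nat.cast_ne_zero.mpr (Nat.factorial_ne_zero _)
  have h2 : ((2*n).factorial : ℚ) ≠ 0 := Nat.cast_ne_zero.mpr (Nat.factorial_ne_zero _)
  have h72 : (72:ℚ)^n ≠ 0 := pow_ne_zero _ (by norm_num)
  have hd3 : (3*(n:ℚ)+3) ≠ 0 := by positivity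
  have hd2 : (2*(n:ℚ)+2) ≠ 0 := by positivity
  have hd1 : ((n:ℚ)+1) ≠ 0 := by positivity
  push_cast
  field_simp
  ring

lemma coeff_euler (f : ℚ⟦X⟧) (n : ℕ) : coeff n (euler f) = n * coeff n f := by
  cases n with
  | zero => simp [euler]
  | succ m =>
    rw [euler, coeff_succ_X_mul, coeff_derivative]
    push_cast
    ring

lemma numeral_C (q : ℚ) : (C q) * (X : ℚ⟦X⟧) = X * C q := mul_comm _ _

lemma hR1 : 6 * euler hgA = X * (36 * euler (euler hgA) + 36 * euler hgA + 5 * hgA) := by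
  have c6 : (6:ℚ⟦X⟧) = C 6 := (map_ofNat (C) 6).symm
  have c36 : (36:ℚ⟦X⟧) = C 36 := (map_ofNat (C) 36).symm
  have c5 : (5:ℚ⟦X⟧) = C 5 := (map_ofNat (C) 5).symm
  ext n
  cases n with
  | zero =>
    simp [c6, coeff_C_mul, coeff_euler]
  | succ m =>
    rw [coeff_succ_X_mul, c6, c36, c5, coeff_C_mul, map_add, map_add, coeff_C_mul,
      coeff_C_mul, coeff_C_mul, coeff_euler, coeff_euler, coeff_euler]
    push_cast
    linear_combination hgA_rec m

lemma coeff_hgB (n : ℕ) : (coeff n) hgB =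
    (coeff n) hgA * ((6*(n:ℚ)+1)/(6*(n:ℚ)-1)) := by
  rw [coeff_hgA]
  simp only [hgB, coeff_mk]
  ring

lemma hgB_eq : hgB = (2*X - 1) * hgA + 12 * (X * euler hgA) := by
  have c2 : (2:ℚ⟦X⟧) = C 2 := (map_ofNat (C) 2).symm
  have c12 : (12:ℚ⟦X⟧) = C 12 := (map_ofNat (C) 12).symm
  have hr : (2*X - 1) * hgA + 12 * (X * euler hgA)
      = C 2 * (X*hgA) - hgA + C 12 * (X*euler hgA) := by
    rw [← c2, ← c12]; ring
  rw [hr]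
  ext n
  rw [map_add, map_sub, coeff_C_mul, coeff_C_mul, coeff_hgB]
  cases n with
  | zero =>
    simp only [coeff_zero_eq_constantCoeff, map_mul, constantCoeff_X, zero_mul, mul_zero]
    have h0 : constantCoeff hgA = 1 := by
      have h := coeff_hgA 0
      rw [coeff_zero_eq_constantCoeff] at h
      simpa [Nat.factorial] using h
    rw [h0]
    norm_num
  | succ m =>
    rw [coeff_succ_X_mul, coeff_succ_X_mul, coeff_euler]
    have hd : (6*(m:ℚ)+5) ≠ 0 := by positivity
    have e : (6*((m:ℚ)+1)-1) = 6*(m:ℚ)+5 := by ring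
    push_cast
    rw [e]
    field_simp
    linear_combination 2 * hgA_rec m

lemma g_const : constantCoeff (hgA - 1) = 0 := by
  rw [map_sub, hgA_zero, map_one, sub_self]

lemma coeff_g_pow_lt {n k : ℕ} (h : n < k) : coeff n ((hgA - 1)^k) = 0 := by
  have hd : (X:ℚ⟦X⟧)^k ∣ (hgA-1)^k :=
    pow_dvd_pow_of_dvd (X_dvd_iff.mpr g_const) k
  exact X_pow_dvd_iff.mp hd n h

lemma coeff_logA (n N : ℕ) (h : n ≤ N) :
    coeff n logA =
      coeff n (∑ k ∈ Finset.range (N+1), C (coeff k logOneAdd) * (hgA-1)^k) := by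
  rw [logA, comp, coeff_mk, map_sum]
  simp_rw [coeff_C_mul]
  apply Finset.sum_subset
  · exact Finset.range_subset_range.mpr (by omega)
  · intro k hk hnk
    have hlt : n < k := by
      simp only [Finset.mem_range] at hk hnk
      omega
    rw [coeff_g_pow_lt hlt, mul_zero]

lemma coeff_logOneAdd_succ (j : ℕ) :
    coeff (j+1) logOneAdd = (-1)^j / ((j:ℚ)+1) := by
  simp [logOneAdd]

lemma deriv_partial (N : ℕ) :
    derivative ℚ (∑ k ∈ Finset.range (N+1), C (coeff k logOneAdd) * (hgA-1)^k)
      = (∑ j ∈ Finset.range N, (-(hgA-1))^j) * derivative ℚ (hgA-1) := by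
  rw [map_sum]
  rw [Finset.sum_range_succ']
  have h0 : derivative ℚ (C (coeff 0 logOneAdd) * (hgA-1)^0) = 0 := by
    simp [logOneAdd]
  rw [h0, add_zero, Finset.sum_mul]
  apply Finset.sum_congr rfl
  intro j hj
  have hc : C (coeff (j+1) logOneAdd) * (((j:ℚ⟦X⟧))+1) = (-1)^j := by
    rw [coeff_logOneAdd_succ]
    have : ((j:ℚ⟦X⟧)) + 1 = C ((j:ℚ)+1) := by
      rw [map_add, map_one, map_natCast]
    rw [this, ← map_mul]
    have hne : ((j:ℚ)+1) ≠ 0 := by positivity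
    rw [div_mul_cancel₀ _ hne]
    rw [← map_one (C), ← map_neg, ← map_pow]
  calc derivative ℚ (C (coeff (j+1) logOneAdd) * (hgA-1)^(j+1))
      = coeff (j+1) logOneAdd • derivative ℚ ((hgA-1)^(j+1)) := by
        rw [← smul_eq_C_mul, (derivative ℚ).map_smul]
    _ = coeff (j+1) logOneAdd • ((j+1) • ((hgA-1)^j • derivative ℚ (hgA-1))) := by
        rw [Derivation.leibniz_pow]
        norm_num
    _ = (-(hgA-1))^j * derivative ℚ (hgA-1) := by
        rw [smul_eq_mul, nsmul_eq_mul, smul_eq_C_mul, ← mul_assoc, ← mul_assoc]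
        push_cast
        rw [mul_comm (C _) (((j:ℚ⟦X⟧))+1), mul_comm _ (C _), hc]
        rw [neg_pow (hgA-1) j]

lemma key : hgA * derivative ℚ logA = derivative ℚ hgA := by
  ext n
  set N := n + 1 with hN
  set S : ℚ⟦X⟧ := ∑ k ∈ Finset.range (N+1), C (coeff k logOneAdd) * (hgA-1)^k with hS
  have step1 : coeff n (hgA * derivative ℚ logA) = coeff n (hgA * derivative ℚ S) := by
    rw [coeff_mul, coeff_mul]
    apply Finset.sum_congr rfl
    intro p hp
    have hp2 : p.2 ≤ n := by
      have := Finset.HasAntidiagonal.mem_antidiagonal.mp hp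
      omega
    rw [coeff_derivative, coeff_derivative, coeff_logA (p.2+1) N (by omega)]
  rw [step1, deriv_partial]
  have hgeo : hgA * ((∑ j ∈ Finset.range N, (-(hgA-1))^j) * derivative ℚ (hgA-1))
      = (1 - (-(hgA-1))^N) * derivative ℚ (hgA-1) := by
    have := geom_sum_mul (-(hgA-1)) N
    -- (∑ i ∈ range N, x ^ i) * (x - 1) = x ^ N - 1
    linear_combination (- derivative ℚ (hgA -1)) * this
  have hder1 : derivative ℚ (hgA - 1) = derivative ℚ hgA := by
    rw [map_sub]
    simp
  rw [hgeo, hder1, sub_mul, one_mul, map_sub]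
  have hzero : coeff n ((-(hgA-1))^N * derivative ℚ hgA) = 0 := by
    have hd : (X:ℚ⟦X⟧)^N ∣ (-(hgA-1))^N * derivative ℚ hgA := by
      apply Dvd.dvd.mul_right
      apply pow_dvd_pow_of_dvd
      rw [X_dvd_iff, map_neg, g_const, neg_zero]
    rw [X_pow_dvd_iff.mp hd n (by omega)]
  rw [hzero, sub_zero]

lemma hone : hgA * hgA⁻¹ = 1 :=
  PowerSeries.mul_inv_cancel _ (by rw [hgA_zero]; norm_num)

lemma hE1 : euler logA = euler hgA * hgA⁻¹ := by
  unfold euler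
  linear_combination (X * hgA⁻¹) * key - (X * derivative ℚ logA) * hone

lemma hd : hgA * derivative ℚ (hgA⁻¹) + hgA⁻¹ * derivative ℚ hgA = 0 := by
  have h := congrArg (derivative ℚ) hone
  rw [Derivation.leibniz, smul_eq_mul, smul_eq_mul, Derivation.map_one_eq_zero] at h
  exact h

lemma hE2 : euler (euler logA) = euler (euler hgA) * hgA⁻¹ - (euler hgA)^2 * (hgA⁻¹)^2 := by
  rw [hE1]
  unfold euler
  have hleib : derivative ℚ (X * derivative ℚ hgA * hgA⁻¹)
      = (X * derivative ℚ hgA) * derivative ℚ (hgA⁻¹)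
        + hgA⁻¹ * derivative ℚ (X * derivative ℚ hgA) := by
    rw [Derivation.leibniz, smul_eq_mul, smul_eq_mul]
  linear_combination X * hleib + (X^2 * derivative ℚ hgA * hgA⁻¹) * hd
    - (X^2 * derivative ℚ hgA * derivative ℚ (hgA⁻¹)) * hone


/-- `z + 4z² + 36z²·(z d/dz)²(log A) + 24z²·(z d/dz)(log A) = 1/4 − (1/4)(B/A)²`. -/
theorem logA_relation :
    PowerSeries.X + 4 * PowerSeries.X ^ 2 + 36 * PowerSeries.X ^ 2 * euler (euler logA) +
        24 * PowerSeries.X ^ 2 * euler logA =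
      PowerSeries.C (1 / 4 : ℚ) - PowerSeries.C (1 / 4 : ℚ) * (hgB * hgA⁻¹) ^ 2 := by
  have hC : (4:ℚ⟦X⟧) * C (1/4) = 1 := by
    rw [show (4:ℚ⟦X⟧) = C 4 from (map_ofNat _ 4).symm, ← map_mul]
    norm_num
  rw [hE2, hE1, hgB_eq]
  linear_combination (-(X * hgA⁻¹)) * hR1
    + (C (1/4) * (4*hgA*hgA⁻¹*X^2 - 4*hgA*hgA⁻¹*X + hgA*hgA⁻¹
        + 48*(euler hgA)*hgA⁻¹*X^2 - 24*(euler hgA)*hgA⁻¹*X + 4*X^2 - 4*X + 1)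
       - 5*X^2) * hone
    + (36*X^2*(euler hgA)^2*(hgA⁻¹)^2 + 12*X^2*(euler hgA)*hgA⁻¹
       - 6*X*(euler hgA)*hgA⁻¹ + X^2 - X) * hC
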